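/- Let {(U_{i1},…,U_{id})}_{i=1}^n be an i.i.d. sample from the probability measure on [0,1]^d with the extended FGM density c (parameters λ^(k)_M satisfying the admissibility constraint). For each k ∈ {1,2} and each M ⊆ {1,…,d} with |M| ≥ 2, the estimator λ̂^(k)_M = (1/n) ∑_{i=1}^n ∏_{m ∈ M} φ_k(U_{im}) is consistent: λ̂^(k)_M converges in probability to λ^(k)_M as n → ∞. -/

import Mathlib

open MeasureTheory ProbabilityTheory Real Finset

/-- The shifted Legendre-type functions: `φ₁(x) = √3 (2x − 1)` and
`φ₂(x) = √5 (6x² − 6x + 1)`. -/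
noncomputable def phiFGM (k : ℕ) (x : ℝ) : ℝ :=
  if k = 1 then Real.sqrt 3 * (2 * x - 1) else Real.sqrt 5 * (6 * x ^ 2 - 6 * x + 1)

/-- Antiderivatives: `Φ₁(x) = √3 (x² − x)` and `Φ₂(x) = √5 (2x³ − 3x² + x)`. -/
noncomputable def PhiFGM (k : ℕ) (x : ℝ) : ℝ :=
  if k = 1 then Real.sqrt 3 * (x ^ 2 - x) else Real.sqrt 5 * (2 * x ^ 3 - 3 * x ^ 2 + x)

/-- The density of the extended `d`-variate FGM copula with parameters `lam k M`:
`c(u) = 1 + ∑_{k=1}^2 ∑_{M ⊆ {1,…,d}, |M| ≥ 2} λ^(k)_M ∏_{m ∈ M} φ_k(u_m)`. -/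
noncomputable def fgmDensity (d : ℕ) (lam : ℕ → Finset (Fin d) → ℝ) (u : Fin d → ℝ) : ℝ :=
  1 + ∑ k ∈ Finset.Icc 1 2, ∑ M ∈ Finset.univ.powerset.filter (fun M : Finset (Fin d) => 2 ≤ M.card),
      lam k M * ∏ m ∈ M, phiFGM k (u m)

/-- The admissibility constraint
`∑_{j=2}^d [ (√3)^j ∑_{|M|=j} |λ^(1)_M| + (√5)^j ∑_{|M|=j} |λ^(2)_M| ] ≤ 1`. -/
def fgmAdmissible (d : ℕ) (lam : ℕ → Finset (Fin d) → ℝ) : Prop :=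
  ∑ M ∈ Finset.univ.powerset.filter (fun M : Finset (Fin d) => 2 ≤ M.card),
      (Real.sqrt 3 ^ M.card * |lam 1 M| + Real.sqrt 5 ^ M.card * |lam 2 M|) ≤ 1

/-- The probability measure on `[0,1]^d` with density `c`: the uniform measure on the
unit cube reweighted by the extended FGM copula density. -/
noncomputable def fgmMeasure (d : ℕ) (lam : ℕ → Finset (Fin d) → ℝ) :
    Measure (Fin d → ℝ) :=
  (Measure.pi fun _ : Fin d => volume.restrict (Set.Icc (0:ℝ) 1)).withDensity
    fun u => ENNReal.ofReal (fgmDensity d lam u)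

section FGMAux

open MeasureTheory intervalIntegral Real Finset

/-- The one-dimensional reference measure. -/
noncomputable abbrev nu01 : Measure ℝ := (volume : Measure ℝ).restrict (Set.Icc (0:ℝ) 1)

lemma quartic_int (p a b c e : ℝ) :
    ∫ x in (0:ℝ)..1, (p*x^4 + a*x^3 + b*x^2 + c*x + e) = p/5 + a/4 + b/3 + c/2 + e := by
  have h : ∀ q : ℝ, ∀ n : ℕ, ∫ x in (0:ℝ)..1, q * x ^ n = q / (n+1) := by
    intro q n
    rw [intervalIntegral.integral_const_mul, integral_pow]
    field_simp
    simp
  have h4 := h p 4; have h3 := h a 3; have h2 := h b 2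
  have h1 : ∫ x in (0:ℝ)..1, c * x = c / 2 := by
    rw [intervalIntegral.integral_const_mul, integral_id]; ring
  have h0 : ∫ x in (0:ℝ)..1, e = e := by simp
  have I : ∀ f : ℝ → ℝ, Continuous f → IntervalIntegrable f volume 0 1 :=
    fun f hf => hf.intervalIntegrable 0 1
  rw [intervalIntegral.integral_add (I _ (by fun_prop)) (I _ (by fun_prop)),
      intervalIntegral.integral_add (I _ (by fun_prop)) (I _ (by fun_prop)),
      intervalIntegral.integral_add (I _ (by fun_prop)) (I _ (by fun_prop)),
      intervalIntegral.integral_add (I _ (by fun_prop)) (I _ (by fun_prop)),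
      h4, h3, h2, h1, h0]
  norm_num

lemma setIcc_eq (f : ℝ → ℝ) : ∫ x in Set.Icc (0:ℝ) 1, f x = ∫ x in (0:ℝ)..1, f x := by
  rw [intervalIntegral.integral_of_le zero_le_one, integral_Icc_eq_integral_Ioc]

lemma phi_meas (k : ℕ) : Measurable (phiFGM k) := by
  unfold phiFGM; split <;> fun_prop

lemma phi_int (k : ℕ) : ∫ x in Set.Icc (0:ℝ) 1, phiFGM k x = 0 := by
  rw [setIcc_eq]
  unfold phiFGM
  split
  · have : (fun x : ℝ => Real.sqrt 3 * (2*x-1)) =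
        fun x : ℝ => (0:ℝ)*x^4 + 0*x^3 + 0*x^2 + (2*Real.sqrt 3)*x + (-Real.sqrt 3) := by
      funext x; ring
    rw [this, quartic_int]; ring
  · have : (fun x : ℝ => Real.sqrt 5 * (6*x^2-6*x+1)) =
        fun x : ℝ => (0:ℝ)*x^4 + 0*x^3 + (6*Real.sqrt 5)*x^2 + (-(6*Real.sqrt 5))*x + Real.sqrt 5 := by
      funext x; ring
    rw [this, quartic_int]; ring

lemma phi_int_mul (a b : ℕ) :
    ∫ x in Set.Icc (0:ℝ) 1, phiFGM a x * phiFGM b x = if (a = 1 ↔ b = 1) then 1 else 0 := by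
  have s3 : Real.sqrt 3 * Real.sqrt 3 = 3 := Real.mul_self_sqrt (by norm_num)
  have s5 : Real.sqrt 5 * Real.sqrt 5 = 5 := Real.mul_self_sqrt (by norm_num)
  rw [setIcc_eq]
  unfold phiFGM
  by_cases ha : a = 1 <;> by_cases hb : b = 1
  · simp only [if_pos ha, if_pos hb, if_pos (show (a=1↔b=1) by simp [ha, hb])]
    have : (fun x : ℝ => (Real.sqrt 3 * (2*x-1)) * (Real.sqrt 3 * (2*x-1))) =
        fun x : ℝ => (0:ℝ)*x^4 + 0*x^3 + (Real.sqrt 3*Real.sqrt 3*4)*x^2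
          + (-(Real.sqrt 3*Real.sqrt 3*4))*x + (Real.sqrt 3*Real.sqrt 3) := by
      funext x; ring
    rw [this, quartic_int, s3]; norm_num
  · simp only [if_pos ha, if_neg hb, if_neg (show ¬(a=1↔b=1) by simp [ha, hb])]
    have : (fun x : ℝ => (Real.sqrt 3 * (2*x-1)) * (Real.sqrt 5 * (6*x^2-6*x+1))) =
        fun x : ℝ => (0:ℝ)*x^4 + (Real.sqrt 3*Real.sqrt 5*12)*x^3
          + (-(Real.sqrt 3*Real.sqrt 5*18))*x^2 + (Real.sqrt 3*Real.sqrt 5*8)*x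
          + (-(Real.sqrt 3*Real.sqrt 5)) := by
      funext x; ring
    rw [this, quartic_int]; ring
  · simp only [if_neg ha, if_pos hb, if_neg (show ¬(a=1↔b=1) by simp [ha, hb])]
    have : (fun x : ℝ => (Real.sqrt 5 * (6*x^2-6*x+1)) * (Real.sqrt 3 * (2*x-1))) =
        fun x : ℝ => (0:ℝ)*x^4 + (Real.sqrt 3*Real.sqrt 5*12)*x^3
          + (-(Real.sqrt 3*Real.sqrt 5*18))*x^2 + (Real.sqrt 3*Real.sqrt 5*8)*x
          + (-(Real.sqrt 3*Real.sqrt 5)) := by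
      funext x; ring
    rw [this, quartic_int]; ring
  · simp only [if_neg ha, if_neg hb, if_pos (show (a=1↔b=1) by simp [ha, hb])]
    have : (fun x : ℝ => (Real.sqrt 5 * (6*x^2-6*x+1)) * (Real.sqrt 5 * (6*x^2-6*x+1))) =
        fun x : ℝ => (Real.sqrt 5*Real.sqrt 5*36)*x^4 + (-(Real.sqrt 5*Real.sqrt 5*72))*x^3
          + (Real.sqrt 5*Real.sqrt 5*48)*x^2 + (-(Real.sqrt 5*Real.sqrt 5*12))*x
          + (Real.sqrt 5*Real.sqrt 5) := by
      funext x; ring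
    rw [this, quartic_int, s5]; norm_num

instance : IsProbabilityMeasure nu01 := by
  constructor; rw [Measure.restrict_apply_univ, Real.volume_Icc]; norm_num

def I01 : Type := ℝ
instance : MeasurableSpace I01 := inferInstanceAs (MeasurableSpace ℝ)
noncomputable instance : MeasureSpace I01 := ⟨nu01⟩
instance : IsProbabilityMeasure (volume : Measure I01) :=
  inferInstanceAs (IsProbabilityMeasure nu01)
instance : SigmaFinite (volume : Measure I01) :=
  inferInstanceAs (SigmaFinite nu01)

lemma pi_prod_integral {d : ℕ} (f : Fin d → ℝ → ℝ) :
    ∫ u, (∏ i, f i (u i)) ∂(Measure.pi fun _ : Fin d => nu01)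
      = ∏ i, ∫ x in Set.Icc (0:ℝ) 1, f i x :=
  by
    haveI : ∀ _ : Fin d, SigmaFinite nu01 := fun _ => inferInstance
    exact MeasureTheory.integral_fintype_prod_eq_prod (𝕜 := ℝ) (ι := Fin d) (μ := fun _ => nu01) (fun i (x : ℝ) => f i x)

lemma phi1_bound {x : ℝ} (hx : x ∈ Set.Icc (0:ℝ) 1) : |phiFGM 1 x| ≤ Real.sqrt 3 := by
  obtain ⟨h0, h1⟩ := hx
  have : phiFGM 1 x = Real.sqrt 3 * (2*x-1) := by simp [phiFGM]
  rw [this, abs_mul, abs_of_nonneg (Real.sqrt_nonneg 3)]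
  nlinarith [abs_le.2 (⟨by linarith, by linarith⟩ : (-1:ℝ) ≤ 2*x-1 ∧ 2*x-1 ≤ 1),
    Real.sqrt_nonneg 3, abs_nonneg (2*x-1)]

lemma phi2_bound {k : ℕ} (hk : k ≠ 1) {x : ℝ} (hx : x ∈ Set.Icc (0:ℝ) 1) :
    |phiFGM k x| ≤ Real.sqrt 5 := by
  obtain ⟨h0, h1⟩ := hx
  have : phiFGM k x = Real.sqrt 5 * (6*x^2-6*x+1) := by simp [phiFGM, hk]
  rw [this, abs_mul, abs_of_nonneg (Real.sqrt_nonneg 5)]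
  have habs : |6*x^2-6*x+1| ≤ 1 := abs_le.2 ⟨by nlinarith, by nlinarith⟩
  nlinarith [Real.sqrt_nonneg 5, abs_nonneg (6*x^2-6*x+1)]

lemma phi_bound5 (k : ℕ) {x : ℝ} (hx : x ∈ Set.Icc (0:ℝ) 1) :
    |phiFGM k x| ≤ Real.sqrt 5 := by
  by_cases hk : k = 1
  · subst hk; exact le_trans (phi1_bound hx) (Real.sqrt_le_sqrt (by norm_num))
  · exact phi2_bound hk hx

lemma prod_phi_le {d : ℕ} (k : ℕ) (B : ℝ) (hB0 : 0 ≤ B)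
    (hB : ∀ x ∈ Set.Icc (0:ℝ) 1, |phiFGM k x| ≤ B) (S : Finset (Fin d))
    {u : Fin d → ℝ} (hu : ∀ i, u i ∈ Set.Icc (0:ℝ) 1) :
    |∏ m ∈ S, phiFGM k (u m)| ≤ B ^ S.card := by
  rw [Finset.abs_prod]
  calc ∏ m ∈ S, |phiFGM k (u m)| ≤ ∏ m ∈ S, B :=
        Finset.prod_le_prod (fun i _ => abs_nonneg _) (fun i _ => hB _ (hu i))
    _ = B ^ S.card := Finset.prod_const B

lemma fgmDensity_nonneg {d : ℕ} {lam : ℕ → Finset (Fin d) → ℝ} (hlam : fgmAdmissible d lam)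
    {u : Fin d → ℝ} (hu : ∀ i, u i ∈ Set.Icc (0:ℝ) 1) : 0 ≤ fgmDensity d lam u := by
  unfold fgmDensity
  rw [show Finset.Icc 1 2 = ({1, 2} : Finset ℕ) from rfl]
  rw [Finset.sum_insert (by norm_num), Finset.sum_singleton]
  have key : |∑ M ∈ Finset.univ.powerset.filter (fun M : Finset (Fin d) => 2 ≤ M.card),
        lam 1 M * ∏ m ∈ M, phiFGM 1 (u m)
      + ∑ M ∈ Finset.univ.powerset.filter (fun M : Finset (Fin d) => 2 ≤ M.card),
        lam 2 M * ∏ m ∈ M, phiFGM 2 (u m)| ≤ 1 := by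
    rw [← Finset.sum_add_distrib]
    calc |∑ M ∈ Finset.univ.powerset.filter (fun M : Finset (Fin d) => 2 ≤ M.card),
            (lam 1 M * ∏ m ∈ M, phiFGM 1 (u m) + lam 2 M * ∏ m ∈ M, phiFGM 2 (u m))|
        ≤ ∑ M ∈ Finset.univ.powerset.filter (fun M : Finset (Fin d) => 2 ≤ M.card),
            |lam 1 M * ∏ m ∈ M, phiFGM 1 (u m) + lam 2 M * ∏ m ∈ M, phiFGM 2 (u m)| :=
          Finset.abs_sum_le_sum_abs _ _
      _ ≤ ∑ M ∈ Finset.univ.powerset.filter (fun M : Finset (Fin d) => 2 ≤ M.card),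
            (Real.sqrt 3 ^ M.card * |lam 1 M| + Real.sqrt 5 ^ M.card * |lam 2 M|) := by
          apply Finset.sum_le_sum
          intro N _
          calc |lam 1 N * ∏ m ∈ N, phiFGM 1 (u m) + lam 2 N * ∏ m ∈ N, phiFGM 2 (u m)|
              ≤ |lam 1 N * ∏ m ∈ N, phiFGM 1 (u m)| + |lam 2 N * ∏ m ∈ N, phiFGM 2 (u m)| :=
                abs_add_le _ _
            _ ≤ Real.sqrt 3 ^ N.card * |lam 1 N| + Real.sqrt 5 ^ N.card * |lam 2 N| := by
                rw [abs_mul, abs_mul]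
                gcongr ?_ + ?_
                · rw [mul_comm]
                  exact mul_le_mul_of_nonneg_right
                    (prod_phi_le 1 _ (Real.sqrt_nonneg 3) (fun x hx => phi1_bound hx) N hu)
                    (abs_nonneg _)
                · rw [mul_comm]
                  exact mul_le_mul_of_nonneg_right
                    (prod_phi_le 2 _ (Real.sqrt_nonneg 5)
                      (fun x hx => phi2_bound (by norm_num) hx) N hu)
                    (abs_nonneg _)
      _ ≤ 1 := hlam
  have := abs_le.1 key
  linarith [this.1]

end FGMAux


section FGMAux2
open MeasureTheory Real Finset

lemma ae_cube {d : ℕ} :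
    ∀ᵐ u ∂(Measure.pi fun _ : Fin d => nu01), ∀ i, u i ∈ Set.Icc (0:ℝ) 1 := by
  set μ := Measure.pi fun _ : Fin d => nu01 with hμ
  have hs : MeasurableSet (Set.univ.pi fun _ : Fin d => Set.Icc (0:ℝ) 1) :=
    MeasurableSet.univ_pi fun _ => measurableSet_Icc
  have h1 : μ (Set.univ.pi fun _ : Fin d => Set.Icc (0:ℝ) 1) = 1 := by
    rw [hμ, Measure.pi_pi]
    simp [nu01, Real.volume_Icc]
  have h0 : μ (Set.univ.pi fun _ : Fin d => Set.Icc (0:ℝ) 1)ᶜ = 0 := by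
    have : IsProbabilityMeasure μ := by infer_instance
    rw [measure_compl hs (by simp), h1, measure_univ]; simp
  refine (ae_iff.2 ?_)
  have hset : {u : Fin d → ℝ | ¬ ∀ i, u i ∈ Set.Icc (0:ℝ) 1}
      = (Set.univ.pi fun _ : Fin d => Set.Icc (0:ℝ) 1)ᶜ := by
    ext u
    simp only [Set.mem_compl_iff, Set.mem_setOf_eq, Set.mem_pi, Set.mem_univ, true_implies]
  rw [hset]
  exact h0

lemma cross_integral {d : ℕ} (k k' : ℕ) (hkk : (k' = 1 ↔ k = 1) → k' = k)
    (M M' : Finset (Fin d)) (hMne : M.Nonempty) :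
    ∫ u, (∏ m ∈ M', phiFGM k' (u m)) * (∏ m ∈ M, phiFGM k (u m))
        ∂(Measure.pi fun _ : Fin d => nu01)
      = if M' = M ∧ k' = k then 1 else 0 := by
  have hrw : ∀ u : Fin d → ℝ,
      (∏ m ∈ M', phiFGM k' (u m)) * (∏ m ∈ M, phiFGM k (u m))
        = ∏ i : Fin d, ((if i ∈ M' then phiFGM k' (u i) else 1)
            * (if i ∈ M then phiFGM k (u i) else 1)) := by
    intro u
    rw [Finset.prod_mul_distrib, Finset.prod_ite_mem, Finset.prod_ite_mem,
      Finset.univ_inter, Finset.univ_inter]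
  simp only [hrw]
  rw [pi_prod_integral (fun i x => (if i ∈ M' then phiFGM k' x else 1)
      * (if i ∈ M then phiFGM k x else 1))]
  have hfac : ∀ i : Fin d,
      (∫ x in Set.Icc (0:ℝ) 1, (if i ∈ M' then phiFGM k' x else 1)
        * (if i ∈ M then phiFGM k x else 1))
      = if i ∈ M' then (if i ∈ M then (if (k' = 1 ↔ k = 1) then (1:ℝ) else 0) else 0)
        else (if i ∈ M then 0 else 1) := by
    intro i
    by_cases h1 : i ∈ M' <;> by_cases h2 : i ∈ M <;>
      simp only [if_pos, if_neg, h1, h2, if_true, if_false, mul_one, one_mul]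
    · exact phi_int_mul k' k
    · exact phi_int k'
    · exact phi_int k
    · simp
  simp only [hfac]
  by_cases hM : M' = M
  · subst hM
    by_cases hkk' : k' = 1 ↔ k = 1
    · rw [if_pos (show M' = M' ∧ k' = k from ⟨rfl, hkk hkk'⟩)]
      calc ∏ i : Fin d, (if i ∈ M' then (if i ∈ M' then (if (k' = 1 ↔ k = 1) then (1:ℝ) else 0) else 0)
              else (if i ∈ M' then 0 else 1)) = ∏ i : Fin d, 1 := by
            apply Finset.prod_congr rfl
            intro i _
            by_cases h : i ∈ M' <;> simp [h, hkk']
        _ = 1 := Finset.prod_const_one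
    · rw [if_neg (show ¬(M' = M' ∧ k' = k) from fun h => hkk' (h.2 ▸ Iff.rfl))]
      obtain ⟨i, hi⟩ := hMne
      refine Finset.prod_eq_zero (Finset.mem_univ i) ?_
      simp [hi, hkk']
  · rw [if_neg (show ¬(M' = M ∧ k' = k) from fun h => hM h.1)]
    have : ∃ i, (i ∈ M' ∧ i ∉ M) ∨ (i ∈ M ∧ i ∉ M') := by
      by_contra hcon
      push_neg at hcon
      apply hM
      ext i
      have := hcon i
      tauto
    obtain ⟨i, hi⟩ := this
    refine Finset.prod_eq_zero (Finset.mem_univ i) ?_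
    rcases hi with ⟨h1, h2⟩ | ⟨h1, h2⟩ <;> simp [h1, h2]

end FGMAux2


section FGMAux3
open MeasureTheory Real Finset

lemma prod_phi_measurable {d : ℕ} (k : ℕ) (S : Finset (Fin d)) :
    Measurable (fun u : Fin d → ℝ => ∏ m ∈ S, phiFGM k (u m)) :=
  Finset.measurable_prod _ fun m _ => (phi_meas k).comp (measurable_pi_apply m)

lemma fgm_expectation {d : ℕ} (lam : ℕ → Finset (Fin d) → ℝ) (hlam : fgmAdmissible d lam)
    (k : ℕ) (hk : k = 1 ∨ k = 2) (M : Finset (Fin d)) (hM : 2 ≤ M.card) :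
    ∫ u, (∏ m ∈ M, phiFGM k (u m)) ∂(fgmMeasure d lam) = lam k M := by
  classical
  set μ : Measure (Fin d → ℝ) := Measure.pi fun _ : Fin d => nu01 with hμdef
  set g : (Fin d → ℝ) → ℝ := fun u => ∏ m ∈ M, phiFGM k (u m) with hgdef
  set filt : Finset (Finset (Fin d)) :=
    Finset.univ.powerset.filter (fun N : Finset (Fin d) => 2 ≤ N.card) with hfilt
  have hMne : M.Nonempty := Finset.card_pos.1 (by omega)
  have hMfilt : M ∈ filt := by
    rw [hfilt, Finset.mem_filter, Finset.mem_powerset]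
    exact ⟨Finset.subset_univ M, hM⟩
  have gmeas : Measurable g := prod_phi_measurable k M
  have cmeas : Measurable (fgmDensity d lam) := by
    unfold fgmDensity
    apply Measurable.add measurable_const
    apply Finset.measurable_sum; intro k' _
    apply Finset.measurable_sum; intro M' _
    exact (prod_phi_measurable k' M').const_mul _
  -- integrability helper
  have hintg : ∀ (k' : ℕ) (M' : Finset (Fin d)),
      Integrable (fun u => (∏ m ∈ M', phiFGM k' (u m)) * g u) μ := by
    intro k' M'
    refine Integrable.mono'
      (integrable_const (Real.sqrt 5 ^ M'.card * Real.sqrt 5 ^ M.card))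
      ((prod_phi_measurable k' M').mul gmeas).aestronglyMeasurable ?_
    filter_upwards [ae_cube] with u hu
    rw [Real.norm_eq_abs, abs_mul]
    have h1 := prod_phi_le k' _ (Real.sqrt_nonneg 5) (fun x hx => phi_bound5 k' hx) M' hu
    have h2 := prod_phi_le k _ (Real.sqrt_nonneg 5) (fun x hx => phi_bound5 k hx) M hu
    exact mul_le_mul h1 h2 (abs_nonneg _) (by positivity)
  have hintg0 : Integrable g μ := by
    have := hintg k (∅ : Finset (Fin d))
    simpa using this
  -- the key cross-integral values
  have hcross : ∀ (k' : ℕ), k' = 1 ∨ k' = 2 →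
      ∀ M' : Finset (Fin d),
      ∫ u, (∏ m ∈ M', phiFGM k' (u m)) * g u ∂μ = if M' = M ∧ k' = k then 1 else 0 := by
    intro k' hk' M'
    exact cross_integral k k' (by rcases hk with rfl | rfl <;> rcases hk' with rfl | rfl <;> simp)
      M M' hMne
  have hg0 : ∫ u, g u ∂μ = 0 := by
    have := hcross k hk (∅ : Finset (Fin d))
    rw [if_neg (by rintro ⟨h, -⟩; exact hMne.ne_empty h.symm)] at this
    simpa using this
  -- unfold the measure
  rw [show fgmMeasure d lam = μ.withDensity
      (fun u => (((fun u => (fgmDensity d lam u).toNNReal) u : NNReal) : ENNReal)) from rfl]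
  rw [integral_withDensity_eq_integral_smul cmeas.real_toNNReal g]
  have e1 : ∫ u, (fgmDensity d lam u).toNNReal • g u ∂μ
      = ∫ u, (g u + ∑ k' ∈ Finset.Icc 1 2, ∑ M' ∈ filt,
          lam k' M' * ((∏ m ∈ M', phiFGM k' (u m)) * g u)) ∂μ := by
    apply integral_congr_ae
    filter_upwards [ae_cube] with u hu
    have hnn : 0 ≤ fgmDensity d lam u := fgmDensity_nonneg hlam hu
    have : (fgmDensity d lam u).toNNReal • g u = fgmDensity d lam u * g u := by
      rw [NNReal.smul_def, Real.coe_toNNReal _ hnn, smul_eq_mul]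
    rw [this]
    show fgmDensity d lam u * g u = _
    unfold fgmDensity
    rw [add_mul, one_mul, Finset.sum_mul]
    congr 1
    apply Finset.sum_congr rfl
    intro k' _
    rw [Finset.sum_mul]
    apply Finset.sum_congr rfl
    intro M' _
    ring
  rw [e1]
  rw [integral_add hintg0 (integrable_finset_sum _ (fun k' _ =>
    integrable_finset_sum _ (fun M' _ => (hintg k' M').const_mul _)))]
  rw [hg0, zero_add]
  rw [integral_finset_sum _ (fun k' _ =>
    integrable_finset_sum _ (fun M' _ => (hintg k' M').const_mul _))]
  have e2 : ∀ k' ∈ Finset.Icc 1 2,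
      (∫ u, (∑ M' ∈ filt, lam k' M' * ((∏ m ∈ M', phiFGM k' (u m)) * g u)) ∂μ)
        = if k' = k then lam k M else 0 := by
    intro k' hk'
    have hk'12 : k' = 1 ∨ k' = 2 := by
      rw [Finset.mem_Icc] at hk'; omega
    rw [integral_finset_sum _ (fun M' _ => (hintg k' M').const_mul _)]
    have : ∀ M' ∈ filt, ∫ u, lam k' M' * ((∏ m ∈ M', phiFGM k' (u m)) * g u) ∂μ
        = lam k' M' * (if M' = M ∧ k' = k then 1 else 0) := by
      intro M' _
      rw [integral_const_mul, hcross k' hk'12 M']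
    rw [Finset.sum_congr rfl this]
    by_cases hkk : k' = k
    · subst hkk
      rw [if_pos rfl]
      calc ∑ M' ∈ filt, lam k' M' * (if M' = M ∧ k' = k' then (1:ℝ) else 0)
          = ∑ M' ∈ filt, (if M' = M then lam k' M' else 0) := by
            apply Finset.sum_congr rfl; intro M' _
            by_cases h : M' = M <;> simp [h]
        _ = lam k' M := by rw [Finset.sum_ite_eq' filt M (fun M' => lam k' M'), if_pos hMfilt]
    · rw [if_neg hkk]
      apply Finset.sum_eq_zero
      intro M' _
      rw [if_neg (by rintro ⟨-, h⟩; exact hkk h), mul_zero]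
  rw [Finset.sum_congr rfl e2]
  calc ∑ k' ∈ Finset.Icc 1 2, (if k' = k then lam k M else 0)
      = if k ∈ Finset.Icc 1 2 then lam k M else 0 := Finset.sum_ite_eq' _ k _
    _ = lam k M := by
        rw [if_pos (by rw [Finset.mem_Icc]; omega)]

end FGMAux3


theorem stmt_11 {Ω : Type*} [MeasurableSpace Ω] (Pr : Measure Ω) [IsProbabilityMeasure Pr]
    (d : ℕ) (hd : 2 ≤ d) (lam : ℕ → Finset (Fin d) → ℝ) (hlam : fgmAdmissible d lam)
    (U : ℕ → Ω → (Fin d → ℝ)) (hmeas : ∀ i, Measurable (U i))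
    (hdist : ∀ i, Measure.map (U i) Pr = fgmMeasure d lam)
    (hindep : ProbabilityTheory.iIndepFun U Pr)
    (k : ℕ) (hk : k ∈ ({1, 2} : Set ℕ)) (M : Finset (Fin d)) (hM : 2 ≤ M.card) :
    ∀ ε : ℝ, 0 < ε →
      Filter.Tendsto
        (fun n : ℕ =>
          Pr {ω | ε ≤
            |(1 / (n : ℝ)) * ∑ i ∈ Finset.range n, ∏ m ∈ M, phiFGM k (U i ω m) - lam k M|})
        Filter.atTop (nhds 0) := by
  intro ε hε
  classical
  have hk12 : k = 1 ∨ k = 2 := by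
    rcases hk with h | h
    · exact Or.inl h
    · exact Or.inr h
  set g : (Fin d → ℝ) → ℝ := fun u => ∏ m ∈ M, phiFGM k (u m) with hg
  have gmeas : Measurable g := prod_phi_measurable k M
  set X : ℕ → Ω → ℝ := fun i ω => g (U i ω) with hX
  have Xmeas : ∀ i, Measurable (X i) := fun i => gmeas.comp (hmeas i)
  -- a.e. the sample lies in the unit cube
  have hcube : ∀ i, ∀ᵐ ω ∂Pr, ∀ m, U i ω m ∈ Set.Icc (0:ℝ) 1 := by
    intro i
    have hms : MeasurableSet {u : Fin d → ℝ | ∀ m, u m ∈ Set.Icc (0:ℝ) 1} := by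
      have : {u : Fin d → ℝ | ∀ m, u m ∈ Set.Icc (0:ℝ) 1}
          = Set.univ.pi (fun _ : Fin d => Set.Icc (0:ℝ) 1) := by
        ext u
        simp only [Set.mem_setOf_eq, Set.mem_pi, Set.mem_univ, true_implies]
      rw [this]; exact MeasurableSet.univ_pi fun _ => measurableSet_Icc
    have h1 : ∀ᵐ u ∂(fgmMeasure d lam), ∀ m, u m ∈ Set.Icc (0:ℝ) 1 := by
      have hae := ae_cube (d := d)
      rw [ae_iff] at hae ⊢
      exact (withDensity_absolutelyContinuous _ _) hae
    rw [← hdist i] at h1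
    exact (ae_map_iff (hmeas i).aemeasurable hms).1 h1
  -- integrability
  have hXint : Integrable (X 0) Pr := by
    refine Integrable.mono' (integrable_const (Real.sqrt 5 ^ M.card))
      (Xmeas 0).aestronglyMeasurable ?_
    filter_upwards [hcube 0] with ω hω
    rw [Real.norm_eq_abs]
    exact prod_phi_le k _ (Real.sqrt_nonneg 5) (fun x hx => phi_bound5 k hx) M hω
  -- pairwise independence
  have hpind : Pairwise (Function.onFun (ProbabilityTheory.IndepFun · · Pr) X) := by
    intro i j hij
    exact (hindep.indepFun hij).comp gmeas gmeas
  -- identical distribution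
  have hid : ∀ i, ProbabilityTheory.IdentDistrib (X i) (X 0) Pr Pr := by
    intro i
    refine ⟨(Xmeas i).aemeasurable, (Xmeas 0).aemeasurable, ?_⟩
    show Measure.map (g ∘ U i) Pr = Measure.map (g ∘ U 0) Pr
    rw [← Measure.map_map gmeas (hmeas i), ← Measure.map_map gmeas (hmeas 0), hdist i, hdist 0]
  -- expectation
  have hmean : ∫ ω, X 0 ω ∂Pr = lam k M := by
    have h := MeasureTheory.integral_map (μ := Pr) (φ := U 0) (hmeas 0).aemeasurable
      gmeas.aestronglyMeasurable
    rw [hdist 0] at h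
    rw [show (∫ ω, X 0 ω ∂Pr) = ∫ ω, g (U 0 ω) ∂Pr from rfl, ← h]
    exact fgm_expectation lam hlam k hk12 M hM
  -- strong law of large numbers
  have hslln := ProbabilityTheory.strong_law_ae X hXint hpind hid
  rw [hmean] at hslln
  -- convergence in probability
  have htm : MeasureTheory.TendstoInMeasure Pr
      (fun (n : ℕ) ω => (n:ℝ)⁻¹ • ∑ i ∈ Finset.range n, X i ω) Filter.atTop
      (fun _ => lam k M) := by
    refine MeasureTheory.tendstoInMeasure_of_tendsto_ae
      (fun n => (Measurable.aestronglyMeasurable ?_)) hslln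
    exact (Finset.measurable_sum _ (fun i _ => Xmeas i)).const_smul ((n:ℝ)⁻¹)
  have := MeasureTheory.tendstoInMeasure_iff_dist.1 htm ε hε
  convert this using 2 with n
  congr 1
  ext ω
  simp only [Real.dist_eq, smul_eq_mul, one_div, Set.mem_setOf_eq]
  rfl
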